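/- Let X be a real symmetric positive definite N×N matrix that is not a scalar multiple of the identity. Then the set S = {D diagonal : 0 ≺ D ≺ 2X^{-1}} strictly contains the cube D_unif = {D diagonal : 0 < D_{ii} < 2/λ_max(X) for all i}; i.e., D_unif ⊆ S and there exists a diagonal D ∈ S with some diagonal entry D_{ii} ≥ 2/λ_max(X). -/

import Mathlib

open Matrix

/-- If `X` is symmetric positive definite and not a scalar multiple of the
identity, then the set `S = {D diagonal : 0 ≺ D ≺ 2X⁻¹}` strictly contains the
cube `{D diagonal : 0 < D_ii < 2/λ_max(X)}`: the cube is contained in `S`, and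
some `D ∈ S` has a diagonal entry `≥ 2/λ_max(X)`. -/
theorem uniform_cube_strict_subset {N : ℕ} (X : Matrix (Fin N) (Fin N) ℝ)
    (hX : X.PosDef) (hns : ∀ c : ℝ, X ≠ c • (1 : Matrix (Fin N) (Fin N) ℝ))
    (lmax : ℝ) (hmem : lmax ∈ spectrum ℝ X)
    (hmax : ∀ μ ∈ spectrum ℝ X, μ ≤ lmax) :
    (∀ d : Fin N → ℝ, (∀ i, 0 < d i ∧ d i < 2 / lmax) →
        (Matrix.diagonal d).PosDef ∧
        ((2 : ℝ) • X⁻¹ - Matrix.diagonal d).PosDef) ∧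
    (∃ d : Fin N → ℝ,
        (Matrix.diagonal d).PosDef ∧
        ((2 : ℝ) • X⁻¹ - Matrix.diagonal d).PosDef ∧
        ∃ i, 2 / lmax ≤ d i) := by
  classical
  have hH : X.IsHermitian := hX.1
  set U : Matrix (Fin N) (Fin N) ℝ := (hH.eigenvectorUnitary : Matrix (Fin N) (Fin N) ℝ) with hU
  have hUU : U * star U = 1 := Matrix.mem_unitaryGroup_iff.mp hH.eigenvectorUnitary.2
  have hUU' : star U * U = 1 := Matrix.mem_unitaryGroup_iff'.mp hH.eigenvectorUnitary.2
  have hspec : X = U * diagonal hH.eigenvalues * star U := by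
    simpa using hH.spectral_theorem
  -- lmax is positive
  rw [hH.spectrum_real_eq_range_eigenvalues] at hmem
  obtain ⟨j0, hj0⟩ := hmem
  have hlpos : 0 < lmax := hj0 ▸ hX.eigenvalues_pos j0
  have hle : ∀ j, hH.eigenvalues j ≤ lmax := fun j =>
    hmax _ (hH.eigenvalues_mem_spectrum_real j)
  have hsmul1 : ∀ c : ℝ, U * (c • (1 : Matrix (Fin N) (Fin N) ℝ)) * star U = c • 1 := by
    intro c
    rw [Matrix.mul_smul, Matrix.mul_one, Matrix.smul_mul, hUU]
  -- X⁻¹ via the spectral decomposition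
  have hXinv : X⁻¹ = U * diagonal (fun j => (hH.eigenvalues j)⁻¹) * star U := by
    refine inv_eq_right_inv ?_
    have hdd : diagonal hH.eigenvalues * diagonal (fun j => (hH.eigenvalues j)⁻¹)
        = (1 : Matrix (Fin N) (Fin N) ℝ) := by
      rw [diagonal_mul_diagonal]
      have h1 : (fun i => hH.eigenvalues i * (hH.eigenvalues i)⁻¹) = fun _ : Fin N => (1 : ℝ) := by
        funext j
        exact mul_inv_cancel₀ (hX.eigenvalues_pos j).ne'
      rw [h1, diagonal_one]
    have key : (U * diagonal hH.eigenvalues * star U) *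
        (U * diagonal (fun j => (hH.eigenvalues j)⁻¹) * star U) = 1 := by
      simp only [← Matrix.mul_assoc]
      rw [Matrix.mul_assoc (U * diagonal hH.eigenvalues) (star U) U, hUU', Matrix.mul_one,
        Matrix.mul_assoc U (diagonal hH.eigenvalues) (diagonal fun j => (hH.eigenvalues j)⁻¹),
        hdd, Matrix.mul_one, hUU]
    rwa [← hspec] at key
  -- M = X⁻¹ - lmax⁻¹ • 1 is positive semidefinite
  set M : Matrix (Fin N) (Fin N) ℝ := X⁻¹ - lmax⁻¹ • 1 with hMdef
  have hMeq : M = U * diagonal (fun j => (hH.eigenvalues j)⁻¹ - lmax⁻¹) * star U := by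
    rw [hMdef, hXinv]
    conv_lhs => rw [← hsmul1 lmax⁻¹]
    rw [← Matrix.sub_mul, ← Matrix.mul_sub]
    congr 2
    rw [smul_one_eq_diagonal, diagonal_sub]
  have hMpsd : M.PosSemidef := by
    rw [hMeq, Matrix.star_eq_conjTranspose]
    exact (posSemidef_diagonal_iff.mpr fun j => sub_nonneg.mpr
      (inv_anti₀ (hX.eigenvalues_pos j) (hle j))).mul_mul_conjTranspose_same U
  -- quadratic-form identity
  have hsingle : ∀ (A : Matrix (Fin N) (Fin N) ℝ) (i : Fin N),
      (Pi.single i 1 : Fin N → ℝ) ⬝ᵥ (A *ᵥ Pi.single i 1) = A i i := by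
    intro A i
    simp [mulVec_single, single_dotProduct]
  have hquad : ∀ (d : Fin N → ℝ) (x : Fin N → ℝ),
      x ⬝ᵥ (((2 : ℝ) • X⁻¹ - diagonal d) *ᵥ x)
        = 2 * (x ⬝ᵥ (M *ᵥ x)) + ∑ j, (2 / lmax - d j) * (x j) ^ 2 := by
    intro d x
    have e1 : x ⬝ᵥ (diagonal d *ᵥ x) = ∑ j, d j * (x j) ^ 2 := by
      simp only [dotProduct, mulVec_diagonal, pow_two]
      exact Finset.sum_congr rfl fun j _ => by ring
    have e2 : x ⬝ᵥ ((lmax⁻¹ • (1 : Matrix (Fin N) (Fin N) ℝ)) *ᵥ x)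
        = lmax⁻¹ * ∑ j, (x j) ^ 2 := by
      simp only [smul_mulVec, one_mulVec, dotProduct, Pi.smul_apply, smul_eq_mul,
        pow_two, Finset.mul_sum]
      exact Finset.sum_congr rfl fun j _ => by ring
    have e3 : x ⬝ᵥ (M *ᵥ x) = x ⬝ᵥ (X⁻¹ *ᵥ x) - lmax⁻¹ * ∑ j, (x j) ^ 2 := by
      rw [hMdef, sub_mulVec, dotProduct_sub, e2]
    have e4 : ∑ j, (2 / lmax - d j) * (x j) ^ 2
        = (2 * lmax⁻¹) * ∑ j, (x j) ^ 2 - ∑ j, d j * (x j) ^ 2 := by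
      rw [Finset.mul_sum, ← Finset.sum_sub_distrib]
      exact Finset.sum_congr rfl fun j _ => by rw [div_eq_mul_inv]; ring
    rw [sub_mulVec, dotProduct_sub, smul_mulVec, dotProduct_smul, e1, e3, e4,
      smul_eq_mul]
    ring
  -- Part 1
  have part1 : ∀ d : Fin N → ℝ, (∀ i, 0 < d i ∧ d i < 2 / lmax) →
      (diagonal d).PosDef ∧ ((2 : ℝ) • X⁻¹ - diagonal d).PosDef := by
    intro d hd
    refine ⟨PosDef.diagonal fun i => (hd i).1, ?_⟩
    have heq : (2 : ℝ) • X⁻¹ - diagonal d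
        = (M + M) + diagonal (fun j => 2 / lmax - d j) := by
      have hdg : diagonal (fun j => 2 / lmax - d j)
          = (2 / lmax) • (1 : Matrix (Fin N) (Fin N) ℝ) - diagonal d := by
        rw [smul_one_eq_diagonal, diagonal_sub]
      rw [hdg, hMdef]
      have h2 : ((2 : ℝ) / lmax) • (1 : Matrix (Fin N) (Fin N) ℝ)
          = lmax⁻¹ • 1 + lmax⁻¹ • 1 := by
        rw [← add_smul]
        congr 1
        field_simp
        ring
      rw [h2]
      have h3 : (2 : ℝ) • X⁻¹ = X⁻¹ + X⁻¹ := two_smul ℝ _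
      rw [h3]
      abel
    rw [heq]
    exact Matrix.PosDef.posSemidef_add (hMpsd.add hMpsd)
      (PosDef.diagonal fun j => sub_pos.mpr (hd j).2)
  refine ⟨part1, ?_⟩
  -- lmax • 1 - X is positive semidefinite
  have hP : (lmax • (1 : Matrix (Fin N) (Fin N) ℝ) - X).PosSemidef := by
    have hPeq : lmax • (1 : Matrix (Fin N) (Fin N) ℝ) - X
        = U * diagonal (fun j => lmax - hH.eigenvalues j) * star U := by
      conv_lhs => rw [hspec, ← hsmul1 lmax]
      rw [← Matrix.sub_mul, ← Matrix.mul_sub]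
      congr 2
      rw [smul_one_eq_diagonal, diagonal_sub]
    rw [hPeq, Matrix.star_eq_conjTranspose]
    exact (posSemidef_diagonal_iff.mpr fun j =>
      sub_nonneg.mpr (hle j)).mul_mul_conjTranspose_same U
  -- there is a diagonal entry of X strictly below lmax
  have hexi : ∃ i, X i i < lmax := by
    by_contra hcon
    push_neg at hcon
    apply hns lmax
    have hPdiag : ∀ i : Fin N,
        (lmax • (1 : Matrix (Fin N) (Fin N) ℝ) - X) *ᵥ Pi.single i 1 = 0 := by
      intro i
      rw [← hP.dotProduct_mulVec_zero_iff, star_trivial, hsingle]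
      have h1 : (lmax • (1 : Matrix (Fin N) (Fin N) ℝ) - X) i i = lmax - X i i := by
        simp [Matrix.sub_apply, Matrix.smul_apply, Matrix.one_apply]
      have h2 : 0 ≤ (lmax • (1 : Matrix (Fin N) (Fin N) ℝ) - X) i i := by
        have := hP.dotProduct_mulVec_nonneg (Pi.single i 1)
        rwa [star_trivial, hsingle] at this
      rw [h1] at h2 ⊢
      linarith [hcon i]
    have hP0 : lmax • (1 : Matrix (Fin N) (Fin N) ℝ) - X = 0 := by
      ext i j
      have := congrFun (hPdiag j) i
      simpa [mulVec_single] using this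
    have := sub_eq_zero.mp hP0
    exact this.symm
  obtain ⟨i, hi⟩ := hexi
  -- the witness: 2/lmax at position i, 1/lmax elsewhere
  refine ⟨fun j => if j = i then 2 / lmax else 1 / lmax, ?_, ?_, ⟨i, by simp⟩⟩
  · refine PosDef.diagonal fun j => ?_
    split <;> positivity
  · refine posDef_iff_dotProduct_mulVec.mpr ⟨?_, fun x hx => ?_⟩
    · have h1 : ((2 : ℝ) • X⁻¹).IsHermitian := by
        unfold Matrix.IsHermitian
        rw [conjTranspose_smul, hX.inv.1.eq]
        simp
      exact h1.sub (isHermitian_diagonal _)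
    · rw [star_trivial, hquad]
      have hterm2 : ∀ j, 0 ≤ (2 / lmax - (if j = i then 2 / lmax else 1 / lmax)) * (x j) ^ 2 := by
        intro j
        refine mul_nonneg ?_ (sq_nonneg _)
        split
        · simp
        · have h1 : 2 / lmax - 1 / lmax = 1 / lmax := by ring
          rw [h1]
          positivity
      by_cases hsupp : ∀ j, j ≠ i → x j = 0
      · have hxi : x i ≠ 0 := by
          intro h0
          apply hx
          funext j
          by_cases hj : j = i
          · rw [hj]; exact h0
          · exact hsupp j hj
        have hxeq : x = x i • (Pi.single i 1 : Fin N → ℝ) := by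
          funext j
          by_cases hj : j = i
          · subst hj; simp
          · simp [Pi.single_eq_of_ne hj, hsupp j hj]
        have hMii0 : 0 ≤ M i i := by
          have := hMpsd.dotProduct_mulVec_nonneg (Pi.single i 1)
          rwa [star_trivial, hsingle] at this
        have hMii : 0 < M i i := by
          rcases hMii0.lt_or_eq with h | h
          · exact h
          exfalso
          have hMv : M *ᵥ Pi.single i 1 = 0 := by
            rw [← hMpsd.dotProduct_mulVec_zero_iff, star_trivial, hsingle, ← h]
          have hinv : X⁻¹ *ᵥ Pi.single i 1 = lmax⁻¹ • (Pi.single i 1 : Fin N → ℝ) := by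
            have h1 := hMv
            rw [hMdef, sub_mulVec, sub_eq_zero] at h1
            rw [h1, smul_mulVec, one_mulVec]
          have hXe : X *ᵥ (X⁻¹ *ᵥ Pi.single i 1) = Pi.single i 1 := by
            rw [mulVec_mulVec, Matrix.mul_nonsing_inv _ (isUnit_iff_ne_zero.mpr hX.det_pos.ne'),
              one_mulVec]
          rw [hinv, mulVec_smul] at hXe
          have h2 : lmax⁻¹ * X i i = 1 := by
            have h3 := congrFun hXe i
            simpa [mulVec_single] using h3
          have h4 : X i i = lmax := by
            field_simp at h2
            linarith
          linarith
        rw [hxeq]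
        have hcomp : (x i • (Pi.single i 1 : Fin N → ℝ)) ⬝ᵥ
            (M *ᵥ (x i • (Pi.single i 1 : Fin N → ℝ))) = (x i) ^ 2 * M i i := by
          rw [mulVec_smul, dotProduct_smul, smul_dotProduct, hsingle]
          simp only [smul_eq_mul, pow_two]
          ring
        rw [hcomp]
        refine add_pos_of_pos_of_nonneg ?_ (Finset.sum_nonneg fun j _ => by
          rw [← hxeq]; exact hterm2 j)
        have h2 : 0 < (x i) ^ 2 := lt_of_le_of_ne (sq_nonneg _) (Ne.symm (pow_ne_zero 2 hxi))
        have h3 : 0 < (x i) ^ 2 * M i i := mul_pos h2 hMii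
        linarith
      · push_neg at hsupp
        obtain ⟨j, hji, hxj⟩ := hsupp
        refine add_pos_of_nonneg_of_pos ?_ ?_
        · have := hMpsd.dotProduct_mulVec_nonneg x
          rw [star_trivial] at this
          linarith
        · refine Finset.sum_pos' (fun k _ => hterm2 k) ⟨j, Finset.mem_univ j, ?_⟩
          rw [if_neg hji]
          have h1 : 2 / lmax - 1 / lmax = 1 / lmax := by ring
          rw [h1]
          positivity
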